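/- (Recurrence structure for the gradient with respect to intermediate states.) Fix m, N ∈ ℕ, matrices E_1, …, E_N ∈ Matrix (Fin m) (Fin m) ℝ, and define z_0 := 1 and z_k := z_{k−1} * E_k for 1 ≤ k ≤ N. Let ψ : (Matrix (Fin m) (Fin m) ℝ)^{N+1} → ℝ be differentiable at (z_0, …, z_N). For 0 ≤ n ≤ N define ψ̃_n : Matrix (Fin m) (Fin m) ℝ → ℝ by ψ̃_n(w) := ψ(z_0, …, z_{n−1}, w, w*E_{n+1}, w*E_{n+1}*E_{n+2}, …, w*E_{n+1}*⋯*E_N). Then for every 0 ≤ n < N and every ξ ∈ Matrix (Fin m) (Fin m) ℝ: fderiv ℝ ψ̃_n (z_n) (ξ) = (partial derivative of ψ at (z_0, …, z_N) in the n-th coordinate, applied to ξ) + fderiv ℝ ψ̃_{n+1} (z_{n+1}) (ξ * E_{n+1}). -/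

import Mathlib

attribute [local instance] Matrix.linftyOpNormedAddCommGroup Matrix.linftyOpNormedRing
  Matrix.linftyOpNormedAlgebra

/-- The intermediate states `z_0 = 1`, `z_k = z_{k-1} * E_k` built from the update
factors `E_1, E_2, …`. -/
noncomputable def interZ (m : ℕ) (E : ℕ → Matrix (Fin m) (Fin m) ℝ) :
    ℕ → Matrix (Fin m) (Fin m) ℝ
  | 0 => 1
  | k + 1 => interZ m E k * E (k + 1)

/-- `ψ̃_n (w) = ψ (z_0, …, z_{n-1}, w, w * E_{n+1}, w * E_{n+1} * E_{n+2}, …,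
w * E_{n+1} * ⋯ * E_N)`: the loss as a function of the `n`-th intermediate state, with all
later states recomputed from `w`. -/
noncomputable def psiTilde (m N : ℕ) (E : ℕ → Matrix (Fin m) (Fin m) ℝ)
    (ψ : (Fin (N + 1) → Matrix (Fin m) (Fin m) ℝ) → ℝ) (n : ℕ)
    (w : Matrix (Fin m) (Fin m) ℝ) : ℝ :=
  ψ (fun k => if (k : ℕ) < n then interZ m E k
      else w * ((List.range ((k : ℕ) - n)).map (fun j => E (n + 1 + j))).prod)

section Aux

variable (m N : ℕ) (E : ℕ → Matrix (Fin m) (Fin m) ℝ)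

local notation "M" => Matrix (Fin m) (Fin m) ℝ

/-- The product of the update factors. -/
noncomputable def prodE (n d : ℕ) : Matrix (Fin m) (Fin m) ℝ :=
  ((List.range d).map (fun j => E (n + 1 + j))).prod

lemma interZ_mul_prodE (n d : ℕ) :
    interZ m E n * prodE m E n d = interZ m E (n + d) := by
  induction d with
  | zero => simp [prodE]
  | succ d ih =>
      rw [prodE, List.range_succ, List.map_append, List.prod_append]
      simp only [List.map_cons, List.map_nil, List.prod_cons, List.prod_nil, mul_one]
      rw [← mul_assoc, prodE] at *
      rw [ih]
      show _ = interZ m E (n + d + 1)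
      rw [interZ]
      ring_nf

lemma prodE_succ_left (n d : ℕ) :
    prodE m E n (d + 1) = E (n + 1) * prodE m E (n + 1) d := by
  rw [prodE, List.range_succ_eq_map, List.map_cons, List.prod_cons, List.map_map, prodE]
  congr 2
  refine List.map_congr_left fun j _ => ?_
  simp only [Function.comp_apply]
  exact congrArg E (by omega)

/-- The linear part of `w ↦ (z_0, …, z_{n-1}, w, w E_{n+1}, …)`. -/
noncomputable def Lmap (n : ℕ) :
    Matrix (Fin m) (Fin m) ℝ →L[ℝ] (Fin (N + 1) → Matrix (Fin m) (Fin m) ℝ) :=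
  ContinuousLinearMap.pi fun k =>
    if (k : ℕ) < n then 0
    else (ContinuousLinearMap.mul ℝ (Matrix (Fin m) (Fin m) ℝ)).flip (prodE m E n ((k : ℕ) - n))

lemma Lmap_apply_lt (n : ℕ) (ξ : Matrix (Fin m) (Fin m) ℝ) (k : Fin (N + 1))
    (h : (k : ℕ) < n) : Lmap m N E n ξ k = 0 := by
  simp [Lmap, h]

lemma Lmap_apply_ge (n : ℕ) (ξ : Matrix (Fin m) (Fin m) ℝ) (k : Fin (N + 1))
    (h : ¬ (k : ℕ) < n) : Lmap m N E n ξ k = ξ * prodE m E n ((k : ℕ) - n) := by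
  simp [Lmap, h]
  rfl

lemma hasFDerivAt_psiTilde (ψ : (Fin (N + 1) → Matrix (Fin m) (Fin m) ℝ) → ℝ)
    (hψ : DifferentiableAt ℝ ψ (fun k => interZ m E (k : ℕ))) (n : ℕ) :
    HasFDerivAt (psiTilde m N E ψ n)
      ((fderiv ℝ ψ (fun k => interZ m E (k : ℕ))).comp (Lmap m N E n))
      (interZ m E n) := by
  set c : Fin (N + 1) → Matrix (Fin m) (Fin m) ℝ :=
    fun k => if (k : ℕ) < n then interZ m E k else 0 with hc
  have hF : psiTilde m N E ψ n = fun w => ψ (c + Lmap m N E n w) := by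
    funext w
    unfold psiTilde
    congr 1
    funext k
    by_cases h : (k : ℕ) < n
    · simp [hc, h, Lmap_apply_lt m N E n w k h]
    · simp [hc, h, Lmap_apply_ge m N E n w k h, prodE]
  have hpt : c + Lmap m N E n (interZ m E n) = fun k : Fin (N + 1) => interZ m E (k : ℕ) := by
    funext k
    by_cases h : (k : ℕ) < n
    · simp [hc, h, Lmap_apply_lt m N E n _ k h]
    · simp only [Pi.add_apply, hc, h, if_false, Lmap_apply_ge m N E n _ k h, zero_add]
      rw [interZ_mul_prodE]
      exact congrArg (interZ m E) (show n + ((k:ℕ) - n) = (k:ℕ) by omega)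
  rw [hF]
  have hL : HasFDerivAt (fun w => c + Lmap m N E n w) (Lmap m N E n) (interZ m E n) :=
    (Lmap m N E n).hasFDerivAt.const_add c
  have hψ' : HasFDerivAt ψ (fderiv ℝ ψ (fun k => interZ m E (k : ℕ)))
      (c + Lmap m N E n (interZ m E n)) := by
    rw [hpt]; exact hψ.hasFDerivAt
  exact hψ'.comp (interZ m E n) hL

end Aux

/-- Recurrence structure for the gradient with respect to the intermediate states:
`(d ψ̃_n)_{z_n} ξ = (∂_n ψ)_{(z_0,…,z_N)} ξ + (d ψ̃_{n+1})_{z_{n+1}} (ξ * E_{n+1})`,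
where the partial derivative in the `n`-th coordinate is the Fréchet derivative of `ψ`
precomposed with the inclusion of the `n`-th coordinate. -/
theorem statement14 (m N : ℕ) (E : ℕ → Matrix (Fin m) (Fin m) ℝ)
    (ψ : (Fin (N + 1) → Matrix (Fin m) (Fin m) ℝ) → ℝ)
    (hψ : DifferentiableAt ℝ ψ (fun k => interZ m E (k : ℕ)))
    (n : ℕ) (hn : n < N) (ξ : Matrix (Fin m) (Fin m) ℝ) :
    fderiv ℝ (psiTilde m N E ψ n) (interZ m E n) ξ =
      fderiv ℝ ψ (fun k => interZ m E (k : ℕ))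
        (Pi.single (⟨n, by omega⟩ : Fin (N + 1)) ξ) +
      fderiv ℝ (psiTilde m N E ψ (n + 1)) (interZ m E (n + 1)) (ξ * E (n + 1)) := by
  rw [(hasFDerivAt_psiTilde m N E ψ hψ n).fderiv,
      (hasFDerivAt_psiTilde m N E ψ hψ (n + 1)).fderiv]
  simp only [ContinuousLinearMap.comp_apply]
  rw [← map_add]
  congr 1
  funext k
  simp only [Pi.add_apply]
  rcases lt_trichotomy (k : ℕ) n with h | h | h
  · rw [Lmap_apply_lt m N E n ξ k h, Lmap_apply_lt m N E (n + 1) _ k (by omega),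
      Pi.single_eq_of_ne (by simp [Fin.ext_iff]; omega), add_zero]
  · have hk : k = ⟨n, by omega⟩ := Fin.ext h
    rw [Lmap_apply_ge m N E n ξ k (by omega), Lmap_apply_lt m N E (n + 1) _ k (by omega),
      hk, Pi.single_eq_same, add_zero]
    simp [prodE]
  · rw [Lmap_apply_ge m N E n ξ k (by omega), Lmap_apply_ge m N E (n + 1) _ k (by omega),
      Pi.single_eq_of_ne (by simp [Fin.ext_iff]; omega), zero_add,
      mul_assoc, ← prodE_succ_left]
    exact congrArg (fun d => ξ * prodE m E n d) (by omega : (k : ℕ) - n = (k : ℕ) - (n + 1) + 1)
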